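/- For D > 0 a discriminant, k > 2 even integer, z ∈ ℍ, and assuming absolute convergence of f_{k,D} and ω_{k+1,D}, the derivative of Zagier's function satisfies d/dz f_{k,D}(z) = (ik/y) f_{k,D}(z) − ik·ω_{k+1,D}(z), where y = Im(z). -/

import Mathlib

open Complex

/-- Integral binary quadratic forms `[a,b,c]` of discriminant `D`. -/
def QD (D : ℤ) : Type := {q : ℤ × ℤ × ℤ // q.2.1 ^ 2 - 4 * q.1 * q.2.2 = D}

/-- `Q(z,1) = a z² + b z + c`. -/
noncomputable def Qcz (q : ℤ × ℤ × ℤ) (z : ℂ) : ℂ :=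
  (q.1 : ℂ) * z ^ 2 + (q.2.1 : ℂ) * z + (q.2.2 : ℂ)

/-- `Q_z = (a|z|² + b Re z + c)/Im z`. -/
noncomputable def Qq (q : ℤ × ℤ × ℤ) (z : ℂ) : ℝ :=
  ((q.1 : ℝ) * ‖z‖ ^ 2 + (q.2.1 : ℝ) * z.re + (q.2.2 : ℝ)) / z.im

/-- Zagier's function `f_{k,D}`. -/
noncomputable def fkD (k : ℕ) (D : ℤ) (z : ℂ) : ℂ :=
  ∑' Q : QD D, 1 / (Qcz Q.1 z) ^ k

/-- The function `ω_{k+1,D}`. -/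
noncomputable def omegaD (k : ℕ) (D : ℤ) (z : ℂ) : ℂ :=
  ∑' Q : QD D, (Qq Q.1 z : ℂ) / (Qcz Q.1 z) ^ (k + 1)

lemma aux_quad (a b c : ℝ) (hD : 0 < b^2 - 4*a*c) (z : ℂ) (hz : 0 < z.im) (w : ℂ)
    (hw : dist w z ≤ z.im/2) :
    0 < ‖(a:ℂ)*z^2+(b:ℂ)*z+(c:ℂ)‖ ∧
    ‖(a:ℂ)*z^2+(b:ℂ)*z+(c:ℂ)‖ / 4 ≤ ‖(a:ℂ)*w^2+(b:ℂ)*w+(c:ℂ)‖ ∧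
    ‖2*(a:ℂ)*w+(b:ℂ)‖ * (z.im/2) ≤ 2 * ‖(a:ℂ)*w^2+(b:ℂ)*w+(c:ℂ)‖ := by
  have hwim : z.im / 2 ≤ w.im := by
    have h1 : |w.im - z.im| ≤ dist w z := by
      rw [Complex.dist_eq]
      have := Complex.abs_im_le_norm (w - z)
      simpa using this
    have := (abs_le.1 h1).1
    linarith
  have root_z : ∀ t : ℝ, z.im ≤ ‖z - t‖ := by
    intro t
    have h := Complex.abs_im_le_norm (z - t)
    simp only [Complex.sub_im, Complex.ofReal_im, sub_zero] at h
    calc z.im ≤ |z.im| := le_abs_self _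
      _ ≤ _ := h
  have root_w : ∀ t : ℝ, ‖z - t‖ / 2 ≤ ‖w - t‖ := by
    intro t
    have h1 : ‖z - t‖ ≤ ‖w - t‖ + dist w z := by
      have : ‖(w - t) - (w - z)‖ ≤ ‖w - t‖ + ‖w - z‖ := by
        simpa using norm_sub_le ((w - t) : ℂ) (w - z)
      rw [Complex.dist_eq]
      calc ‖z - t‖ = ‖(w - t) - (w - z)‖ := by ring_nf
        _ ≤ _ := this
    have h3 := root_z t
    linarith [hw]
  have root_wim : ∀ t : ℝ, z.im / 2 ≤ ‖w - t‖ := by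
    intro t
    have h := Complex.abs_im_le_norm (w - t)
    simp only [Complex.sub_im, Complex.ofReal_im, sub_zero] at h
    calc z.im/2 ≤ w.im := hwim
      _ ≤ |w.im| := le_abs_self _
      _ ≤ _ := h
  by_cases ha : a = 0
  · have hb : b ≠ 0 := by
      intro hb; rw [ha, hb] at hD; norm_num at hD
    set t : ℝ := -(c / b) with ht
    have fact : ∀ u : ℂ, (a:ℂ)*u^2+(b:ℂ)*u+(c:ℂ) = (b:ℂ) * (u - t) := by
      intro u
      have hbC : (b:ℂ) ≠ 0 := by exact_mod_cast hb
      rw [ha]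
      push_cast [ht]
      field_simp
      ring
    have habs : ∀ u : ℂ, ‖(a:ℂ)*u^2+(b:ℂ)*u+(c:ℂ)‖ = |b| * ‖u - t‖ := by
      intro u
      rw [fact u, norm_mul, Complex.norm_real, Real.norm_eq_abs]
    have hb' : 0 < |b| := abs_pos.2 hb
    refine ⟨?_, ?_, ?_⟩
    · rw [habs]
      exact mul_pos hb' (lt_of_lt_of_le hz (root_z t))
    · rw [habs, habs]
      have h1 := root_w t
      nlinarith [norm_nonneg (z - (t:ℂ))]
    · rw [habs]
      have : ‖2*(a:ℂ)*w+(b:ℂ)‖ = |b| := by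
        rw [ha]; push_cast; simp
      rw [this]
      have h1 := root_wim t
      nlinarith
  · have haC : (a:ℂ) ≠ 0 := by exact_mod_cast ha
    set s : ℝ := Real.sqrt (b^2 - 4*a*c) with hs
    have hs2 : s^2 = b^2 - 4*a*c := Real.sq_sqrt hD.le
    set α : ℝ := (-b + s)/(2*a) with hα
    set β : ℝ := (-b - s)/(2*a) with hβ
    have hs2C : (s:ℂ)^2 = (b:ℂ)^2 - 4*(a:ℂ)*(c:ℂ) := by exact_mod_cast hs2
    have fact : ∀ u : ℂ, (a:ℂ)*u^2+(b:ℂ)*u+(c:ℂ) = (a:ℂ) * (u - α) * (u - β) := by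
      intro u
      push_cast [hα, hβ]
      field_simp
      linear_combination hs2C
    have habs : ∀ u : ℂ, ‖(a:ℂ)*u^2+(b:ℂ)*u+(c:ℂ)‖
        = |a| * (‖u - α‖ * ‖u - β‖) := by
      intro u
      rw [fact u, norm_mul, norm_mul, Complex.norm_real, Real.norm_eq_abs, mul_assoc]
    have ha' : 0 < |a| := abs_pos.2 ha
    have dfact : ∀ u : ℂ, 2*(a:ℂ)*u+(b:ℂ) = (a:ℂ)*(u - α) + (a:ℂ)*(u - β) := by
      intro u
      push_cast [hα, hβ]
      field_simp
      ring
    refine ⟨?_, ?_, ?_⟩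
    · rw [habs]
      exact mul_pos ha' (mul_pos (lt_of_lt_of_le hz (root_z α)) (lt_of_lt_of_le hz (root_z β)))
    · rw [habs, habs]
      have h1 := root_w α
      have h2 := root_w β
      have key := mul_le_mul h1 h2 (by positivity) (norm_nonneg _)
      calc |a| * (‖z - (α:ℂ)‖ * ‖z - (β:ℂ)‖) / 4
          = |a| * ((‖z - (α:ℂ)‖/2) * (‖z - (β:ℂ)‖/2)) := by ring
        _ ≤ |a| * (‖w - (α:ℂ)‖ * ‖w - (β:ℂ)‖) :=
            mul_le_mul_of_nonneg_left key ha'.le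
    · rw [habs]
      have htri : ‖2*(a:ℂ)*w+(b:ℂ)‖
          ≤ |a| * ‖w - α‖ + |a| * ‖w - β‖ := by
        rw [dfact w]
        calc ‖(a:ℂ)*(w - α) + (a:ℂ)*(w - β)‖
            ≤ ‖(a:ℂ)*(w - α)‖ + ‖(a:ℂ)*(w - β)‖ := by
              simpa using norm_add_le ((a:ℂ)*(w - α)) ((a:ℂ)*(w - β))
          _ = |a| * ‖w - α‖ + |a| * ‖w - β‖ := by
              rw [norm_mul, norm_mul, Complex.norm_real, Real.norm_eq_abs]
      have h1 := root_wim α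
      have h2 := root_wim β
      have n1 : (0:ℝ) ≤ ‖w - (α:ℂ)‖ := norm_nonneg _
      have n2 : (0:ℝ) ≤ ‖w - (β:ℂ)‖ := norm_nonneg _
      have hy2 : (0:ℝ) ≤ z.im/2 := by linarith
      nlinarith [mul_le_mul_of_nonneg_right htri hy2,
        mul_le_mul_of_nonneg_left h2 (mul_nonneg ha'.le n1),
        mul_le_mul_of_nonneg_left h1 (mul_nonneg ha'.le n2)]

lemma aux_key (q : ℤ × ℤ × ℤ) (z : ℂ) (hz : 0 < z.im) :
    ((q.1:ℝ):ℂ)*z^2+((q.2.1:ℝ):ℂ)*z+((q.2.2:ℝ):ℂ)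
      = ((((q.1:ℝ) * ‖z‖ ^ 2 + (q.2.1:ℝ) * z.re + (q.2.2:ℝ)) / z.im : ℝ):ℂ)
          * (z.im : ℂ)
        + Complex.I * z.im * (2*((q.1:ℝ):ℂ)*z + ((q.2.1:ℝ):ℂ)) := by
  have hy : (z.im:ℝ) ≠ 0 := ne_of_gt hz
  rw [Complex.ofReal_div, div_mul_cancel₀]
  · have habs : (‖z‖)^2 = z.re^2 + z.im^2 := by
      rw [Complex.sq_norm, Complex.normSq_apply]; ring
    rw [habs]
    apply Complex.ext <;>
      simp [Complex.add_re, Complex.add_im, Complex.mul_re, Complex.mul_im, pow_two] <;> ring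
  · exact_mod_cast hy

lemma aux_point (m : ℕ) (y : ℝ) (hy : (0:ℝ) < y) (A P Qv : ℂ) (hP : P ≠ 0)
    (hkey : P = Qv * (y:ℂ) + Complex.I * (y:ℂ) * A) :
    -((m:ℂ)+1) * A / P^(m+2)
      = Complex.I * ((m:ℂ)+1) / (y:ℂ) * (1/P^(m+1)) - Complex.I * ((m:ℂ)+1) * (Qv/P^(m+2)) := by
  have hyC : (y:ℂ) ≠ 0 := by exact_mod_cast ne_of_gt hy
  have e1 : (1:ℂ)/P^(m+1) = P/P^(m+2) := by
    conv_rhs => rw [pow_succ, mul_comm (P^(m+1)) P, div_mul_cancel_left₀ hP]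
    rw [one_div]
  rw [e1, ← mul_div_assoc, ← mul_div_assoc, div_sub_div_same]
  have hnum : -((m:ℂ)+1) * A = Complex.I * ((m:ℂ)+1) / (y:ℂ) * P - Complex.I * ((m:ℂ)+1) * Qv := by
    field_simp
    linear_combination (-Complex.I) * hkey + (-A*(y:ℂ)) * Complex.I_sq
  rw [hnum]

lemma aux_bound (m : ℕ) (y A B B0 : ℝ) (hy : 0 < y) (hB0 : 0 < B0)
    (h1 : B0/4 ≤ B) (h2 : A * (y/2) ≤ 2*B) :
    ((m:ℝ)+1) * A / B^(m+2) ≤ (4*((m:ℝ)+1)*4^(m+1)/y) * (B0^(m+1))⁻¹ := by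
  have hB : 0 < B := lt_of_lt_of_le (by positivity) h1
  have hp : B0^(m+1) ≤ 4^(m+1) * B^(m+1) := by
    have h3 : (B0/4)^(m+1) ≤ B^(m+1) := pow_le_pow_left₀ (by positivity) h1 _
    rw [div_pow] at h3
    calc B0^(m+1) = (B0^(m+1)/4^(m+1)) * 4^(m+1) := by field_simp
      _ ≤ B^(m+1) * 4^(m+1) := by
          apply mul_le_mul_of_nonneg_right h3 (by positivity)
      _ = 4^(m+1) * B^(m+1) := by ring
  have hrhs : (4*((m:ℝ)+1)*4^(m+1)/y) * (B0^(m+1))⁻¹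
      = (4*((m:ℝ)+1)*4^(m+1)) / (y * B0^(m+1)) := by
    rw [div_mul_eq_mul_div, ← div_eq_mul_inv, div_div, mul_comm (B0^(m+1)) y]
  rw [hrhs, div_le_div_iff₀ (by positivity) (by positivity)]
  have hAy : A * y ≤ 4 * B := by linarith
  calc ((m:ℝ)+1) * A * (y * B0^(m+1)) = (((m:ℝ)+1) * B0^(m+1)) * (A * y) := by ring
    _ ≤ (((m:ℝ)+1) * B0^(m+1)) * (4*B) := mul_le_mul_of_nonneg_left hAy (by positivity)
    _ = (4*((m:ℝ)+1)*B) * B0^(m+1) := by ring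
    _ ≤ (4*((m:ℝ)+1)*B) * (4^(m+1) * B^(m+1)) := mul_le_mul_of_nonneg_left hp (by positivity)
    _ = 4*((m:ℝ)+1)*4^(m+1) * B^(m+2) := by rw [pow_succ B (m+1)]; ring

lemma aux_deriv (m : ℕ) (q : ℤ × ℤ × ℤ) (w : ℂ)
    (hne : ((q.1:ℂ) * w ^ 2 + (q.2.1:ℂ) * w + (q.2.2:ℂ)) ≠ 0) :
    HasDerivAt (fun u : ℂ => 1 / ((q.1:ℂ) * u ^ 2 + (q.2.1:ℂ) * u + (q.2.2:ℂ))^(m+1))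
      (-((m:ℂ)+1) * (2*(q.1:ℂ)*w + (q.2.1:ℂ))
        / ((q.1:ℂ) * w ^ 2 + (q.2.1:ℂ) * w + (q.2.2:ℂ))^(m+2)) w := by
  set P : ℂ → ℂ := fun u => (q.1:ℂ) * u ^ 2 + (q.2.1:ℂ) * u + (q.2.2:ℂ) with hPdef
  have hP : HasDerivAt P (2*(q.1:ℂ)*w + (q.2.1:ℂ)) w := by
    have h1 : HasDerivAt (fun u : ℂ => (q.1:ℂ) * u ^ 2) ((q.1:ℂ) * (2*w)) w := by
      simpa using (hasDerivAt_pow 2 w).const_mul (q.1:ℂ)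
    have h2 : HasDerivAt (fun u : ℂ => (q.2.1:ℂ) * u) (q.2.1:ℂ) w := by
      simpa using (hasDerivAt_id w).const_mul (q.2.1:ℂ)
    have h3 := (h1.add h2).add_const (q.2.2:ℂ)
    refine HasDerivAt.congr_deriv h3 ?_
    ring
  have hPk : HasDerivAt (fun u => (P u)^(m+1))
      (((m:ℂ)+1) * (P w)^m * (2*(q.1:ℂ)*w + (q.2.1:ℂ))) w := by
    have := hP.pow (m+1)
    simp only [Nat.add_sub_cancel, Nat.cast_add, Nat.cast_one] at this
    exact this
  have hdiv := (hasDerivAt_const w (1:ℂ)).div hPk (pow_ne_zero _ hne)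
  refine HasDerivAt.congr_deriv hdiv ?_
  have hPw : P w ≠ 0 := hne
  show _ = -((m:ℂ)+1) * (2*(q.1:ℂ)*w + (q.2.1:ℂ)) / (P w)^(m+2)
  field_simp
  ring

theorem stmt17 (D : ℤ) (hD : 0 < D) (k : ℕ) (hk : 2 < k) (hkeven : Even k)
    (z : ℂ) (hz : 0 < z.im)
    (hf : Summable fun Q : QD D => ‖1 / (Qcz Q.1 z) ^ k‖)
    (hω : Summable fun Q : QD D => ‖(Qq Q.1 z : ℂ) / (Qcz Q.1 z) ^ (k + 1)‖) :
    deriv (fkD k D) z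
      = Complex.I * (k : ℂ) / (z.im : ℂ) * fkD k D z
        - Complex.I * (k : ℂ) * omegaD k D z := by
  obtain ⟨m, rfl⟩ : ∃ m, k = m + 1 := ⟨k - 1, by omega⟩
  set t : Set ℂ := Metric.ball z (z.im/2) with ht
  set g : QD D → ℂ → ℂ := fun Q w => 1 / (Qcz Q.1 w)^(m+1) with hg
  set g' : QD D → ℂ → ℂ :=
    fun Q w => -((m:ℂ)+1) * (2*(Q.1.1:ℂ)*w + (Q.1.2.1:ℂ)) / (Qcz Q.1 w)^(m+2) with hg'
  set u : QD D → ℝ :=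
    fun Q => (4*((m:ℝ)+1)*4^(m+1)/z.im) * ‖1/(Qcz Q.1 z)^(m+1)‖ with hu
  have facts : ∀ (Q : QD D) (w : ℂ), w ∈ t →
      (Qcz Q.1 w ≠ 0) ∧ ‖Qcz Q.1 z‖ / 4 ≤ ‖Qcz Q.1 w‖ ∧
      ‖2*(Q.1.1:ℂ)*w + (Q.1.2.1:ℂ)‖ * (z.im/2) ≤ 2 * ‖Qcz Q.1 w‖ ∧
      0 < ‖Qcz Q.1 z‖ := by
    intro Q w hwt
    have hD' : 0 < (Q.1.2.1:ℝ)^2 - 4*(Q.1.1:ℝ)*(Q.1.2.2:ℝ) := by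
      have h0 := hD
      rw [← Q.2] at h0
      exact_mod_cast h0
    have hwd : dist w z ≤ z.im/2 := le_of_lt (by simpa [ht, Metric.mem_ball] using hwt)
    have H := aux_quad _ _ _ hD' z hz w hwd
    simp only [Complex.ofReal_intCast] at H
    have c1 : ∀ v : ℂ, (Q.1.1:ℂ)*v^2+(Q.1.2.1:ℂ)*v+(Q.1.2.2:ℂ) = Qcz Q.1 v := by
      intro v; rfl
    rw [c1 z, c1 w] at H
    have hBw : 0 < ‖Qcz Q.1 w‖ := lt_of_lt_of_le (by linarith [H.1]) H.2.1
    refine ⟨?_, H.2.1, H.2.2, H.1⟩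
    intro h0
    rw [h0] at hBw
    simp at hBw
  have hu_sum : Summable u := hf.mul_left _
  have hder : ∀ (Q : QD D) (w : ℂ), w ∈ t → HasDerivAt (g Q) (g' Q w) w := by
    intro Q w hwt
    exact aux_deriv m Q.1 w ((facts Q w hwt).1)
  have hbound : ∀ (Q : QD D) (w : ℂ), w ∈ t → ‖g' Q w‖ ≤ u Q := by
    intro Q w hwt
    obtain ⟨hne, hcomp, hderb, hbz⟩ := facts Q w hwt
    have e1 : ‖g' Q w‖ = ((m:ℝ)+1) * ‖2*(Q.1.1:ℂ)*w + (Q.1.2.1:ℂ)‖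
        / (‖Qcz Q.1 w‖)^(m+2) := by
      have hm : ‖-((m:ℂ)+1)‖ = (m:ℝ)+1 := by
        rw [norm_neg]
        rw [show ((m:ℂ)+1) = ((m+1:ℕ):ℂ) by push_cast; ring, Complex.norm_natCast]
        push_cast
        ring
      simp only [hg', norm_div, norm_mul, norm_pow, hm]
    have e2 : ‖1/(Qcz Q.1 z)^(m+1)‖ = ((‖Qcz Q.1 z‖)^(m+1))⁻¹ := by
      simp [norm_pow]
    rw [e1]
    show _ ≤ 4*((m:ℝ)+1)*4^(m+1)/z.im * ‖1/(Qcz Q.1 z)^(m+1)‖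
    rw [e2]
    exact aux_bound m z.im _ _ _ hz hbz hcomp hderb
  have hzt : z ∈ t := Metric.mem_ball_self (by positivity)
  have hsum0 : Summable fun Q : QD D => g Q z := hf.of_norm
  have HD := hasDerivAt_tsum_of_isPreconnected hu_sum Metric.isOpen_ball
      ((convex_ball z (z.im/2)).isPreconnected) hder hbound hzt hsum0 hzt
  have hderiv : deriv (fkD (m+1) D) z = ∑' Q : QD D, g' Q z := by
    have h : HasDerivAt (fkD (m+1) D) (∑' Q : QD D, g' Q z) z := HD
    exact h.deriv
  rw [hderiv]
  have hPz : ∀ Q : QD D, Qcz Q.1 z ≠ 0 := fun Q => (facts Q z hzt).1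
  have point : ∀ Q : QD D, g' Q z
      = Complex.I * ((m:ℂ)+1) / (z.im:ℂ) * (1/(Qcz Q.1 z)^(m+1))
        - Complex.I * ((m:ℂ)+1) * (((Qq Q.1 z : ℝ):ℂ)/(Qcz Q.1 z)^(m+2)) := by
    intro Q
    have hkey : Qcz Q.1 z = ((Qq Q.1 z : ℝ):ℂ) * (z.im:ℂ)
        + Complex.I * (z.im:ℂ) * (2*(Q.1.1:ℂ)*z + (Q.1.2.1:ℂ)) := by
      have h := aux_key Q.1 z hz
      simp only [Complex.ofReal_intCast] at h
      exact h
    exact aux_point m z.im hz _ _ _ (hPz Q) hkey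
  rw [tsum_congr point]
  have s1 : Summable fun Q : QD D =>
      Complex.I * ((m:ℂ)+1) / (z.im:ℂ) * (1/(Qcz Q.1 z)^(m+1)) :=
    (hf.of_norm).mul_left _
  have s2 : Summable fun Q : QD D =>
      Complex.I * ((m:ℂ)+1) * (((Qq Q.1 z : ℝ):ℂ)/(Qcz Q.1 z)^(m+2)) :=
    (hω.of_norm).mul_left _
  rw [Summable.tsum_sub s1 s2, tsum_mul_left, tsum_mul_left]
  rw [fkD, omegaD]
  push_cast
  ring
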